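/- arXiv:1208.0398 — 9 statements merged into one kernel-verified Lean document; each statement's English description precedes it below -/
import Mathlib

section
/- If H is a prime tournament and X is a nonempty homogeneous set of a tournament G, then G is H-free if and only if both G/X and G[X] are H-free, where G/X denotes the subtournament of G induced on (V(G)\X) ∪ {v} for any fixed v ∈ X. -/
/-- A tournament: irreflexive, and between any two distinct vertices exactly one edge. -/
def IsTournament {V : Type*} (r : V → V → Prop) : Prop :=
  (∀ v, ¬ r v v) ∧ ∀ u v : V, u ≠ v → (r u v ↔ ¬ r v u)

/-- A homogeneous set. -/
def IsHomog {V : Type*} (r : V → V → Prop) (X : Set V) : Prop :=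
  ∀ v ∉ X, (∀ x ∈ X, r v x) ∨ (∀ x ∈ X, r x v)

/-- A prime tournament: every homogeneous set is trivial. -/
def IsPrime {V : Type*} (r : V → V → Prop) : Prop :=
  ∀ X : Set V, IsHomog r X → X.Subsingleton ∨ X = Set.univ

/-- A set of vertices is transitive: it induces no cyclic triangle. -/
def IsTransOn {V : Type*} (r : V → V → Prop) (X : Set V) : Prop :=
  ∀ a ∈ X, ∀ b ∈ X, ∀ c ∈ X, ¬ (r a b ∧ r b c ∧ r c a)

/-- `G` has a copy of `H` inside the vertex set `S`. -/
def CopyIn {V W : Type*} (r : V → V → Prop) (s : W → W → Prop) (S : Set V) : Prop :=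
  ∃ f : W → V, (∀ a, f a ∈ S) ∧ Function.Injective f ∧ ∀ a b, s a b → r (f a) (f b)

/-- For prime H and a nonempty homogeneous set X of G, G is H-free iff
G/X and G[X] are both H-free. -/
theorem hfree_iff_quotient_and_part {V W : Type*} [Fintype V] [Fintype W]
    (r : V → V → Prop) (s : W → W → Prop)
    (hG : IsTournament r) (hH : IsTournament s) (hHp : IsPrime s)
    (X : Set V) (hX : IsHomog r X) (v : V) (hv : v ∈ X) :
    ¬ CopyIn r s Set.univ ↔
      (¬ CopyIn r s ((Set.univ \ X) ∪ {v}) ∧ ¬ CopyIn r s X) := by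
  constructor
  · intro h
    constructor <;> rintro ⟨f, hf1, hf2, hf3⟩ <;>
      exact h ⟨f, fun a => trivial, hf2, hf3⟩
  · rintro ⟨h1, h2⟩ ⟨f, -, hf2, hf3⟩
    have hne : ∀ a b : W, s a b → a ≠ b := by
      rintro a b hs rfl; exact hH.1 a hs
    have key : IsHomog s (f ⁻¹' X) := by
      intro w hw
      rcases hX (f w) hw with h | h
      · left; intro a ha
        have hwa : w ≠ a := by rintro rfl; exact hw ha
        by_contra hns
        have hsa : s a w := ((hH.2 a w hwa.symm).mpr) (by
          intro hsw; exact hns hsw)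
        have hr1 : r (f a) (f w) := hf3 a w hsa
        have hr2 : r (f w) (f a) := h (f a) ha
        exact ((hG.2 (f a) (f w) (fun he => hw (show f w ∈ X from he ▸ ha))).mp hr1) hr2
      · right; intro a ha
        have hwa : w ≠ a := by rintro rfl; exact hw ha
        by_contra hns
        have hsa : s w a := ((hH.2 w a hwa).mpr) (by
          intro hsw; exact hns hsw)
        have hr1 : r (f w) (f a) := hf3 w a hsa
        have hr2 : r (f a) (f w) := h (f a) ha
        exact ((hG.2 (f w) (f a) (fun he => hw (show f w ∈ X from he.symm ▸ ha))).mp hr1) hr2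
    rcases hHp _ key with hss | huniv
    · -- build copy in (univ \ X) ∪ {v}
      classical
      set g : W → V := fun a => if f a ∈ X then v else f a with hg
      apply h1
      refine ⟨g, ?_, ?_, ?_⟩
      · intro a
        by_cases hfa : f a ∈ X
        · right; simp [hg, hfa]
        · left; simp [hg, hfa]
      · intro a b hab
        by_cases hfa : f a ∈ X <;> by_cases hfb : f b ∈ X
        · exact hss hfa hfb
        · exfalso; simp only [hg, if_pos hfa, if_neg hfb] at hab
          exact hfb (hab ▸ hv)
        · exfalso; simp only [hg, if_neg hfa, if_pos hfb] at hab
          exact hfa (hab.symm ▸ hv)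
        · simp only [hg, if_neg hfa, if_neg hfb] at hab
          exact hf2 hab
      · intro a b hsab
        have hab : a ≠ b := hne a b hsab
        have hfab : f a ≠ f b := fun he => hab (hf2 he)
        by_cases hfa : f a ∈ X <;> by_cases hfb : f b ∈ X
        · exact absurd (hss hfa hfb) hab
        · simp only [hg, if_pos hfa, if_neg hfb]
          rcases hX (f b) hfb with h | h
          · exfalso
            exact ((hG.2 (f a) (f b) hfab).mp (hf3 a b hsab)) (h (f a) hfa)
          · exact h v hv
        · simp only [hg, if_neg hfa, if_pos hfb]
          rcases hX (f a) hfa with h | h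
          · exact h v hv
          · exfalso
            exact ((hG.2 (f a) (f b) hfab).mp (hf3 a b hsab)) (h (f b) hfb)
        · simp only [hg, if_neg hfa, if_neg hfb]
          exact hf3 a b hsab
    · apply h2
      refine ⟨f, ?_, hf2, hf3⟩
      intro a
      have : a ∈ f ⁻¹' X := huniv ▸ Set.mem_univ a
      exact this
end

section
/- The tournament T_n is prime for every odd n ≥ 1. -/
/-- The tournament T_n: vertices v_1,...,v_n (here indices 0,...,n-1), with
v_i → v_j iff j - i ≡ 1, ..., (n-1)/2 (mod n). -/
def Tn (n : ℕ) (i j : Fin n) : Prop :=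
  1 ≤ (j.val + n - i.val) % n ∧ (j.val + n - i.val) % n ≤ (n - 1) / 2

open Fin.NatCast Fin.CommRing

section Helpers

variable {n : ℕ} [NeZero n]

/-- Value of a difference in `Fin n`. -/
lemma fin_sub_val (a b : Fin n) : (a - b).val = (a.val + n - b.val) % n := by
  rw [Fin.sub_def]
  simp only [Fin.val_mk]
  have hb := b.isLt
  congr 1
  omega

/-- Spec of subtraction values, omega-friendly. -/
lemma fin_sub_val_spec (a b : Fin n) :
    (a - b).val + b.val = a.val ∨ (a - b).val + b.val = a.val + n := by
  have ha := a.isLt; have hb := b.isLt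
  rw [fin_sub_val]
  rcases lt_or_ge (a.val + n - b.val) n with h | h
  · right; rw [Nat.mod_eq_of_lt h]; omega
  · left
    rw [Nat.mod_eq_sub_mod h, Nat.mod_eq_of_lt (by omega)]
    omega

/-- Spec of addition values, omega-friendly. -/
lemma fin_add_val_spec (a b : Fin n) :
    (a + b).val = a.val + b.val ∨ (a + b).val + n = a.val + b.val := by
  have ha := a.isLt; have hb := b.isLt
  rw [Fin.add_def]
  rcases lt_or_ge (a.val + b.val) n with h | h
  · left; exact Nat.mod_eq_of_lt h
  · right
    simp only []
    rw [Nat.mod_eq_sub_mod h, Nat.mod_eq_of_lt (by omega)]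
    omega

lemma tn_iff (i j : Fin n) :
    Tn n i j ↔ 1 ≤ (j - i).val ∧ (j - i).val ≤ (n - 1) / 2 := by
  rw [Tn, fin_sub_val]

lemma tn_asymm {i j : Fin n} (h1 : Tn n i j) (h2 : Tn n j i) : False := by
  obtain ⟨m, hm⟩ : ∃ m, n = 2 * m + 1 ∨ n = 2 * m := ⟨n / 2, by omega⟩
  rw [tn_iff] at h1 h2
  have e1 := fin_sub_val_spec j i
  have e2 := fin_sub_val_spec i j
  have l1 := (j - i).isLt
  have l2 := (i - j).isLt
  have hi := i.isLt; have hj := j.isLt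
  omega

/-- If X contains a point and misses a point, it has a right boundary point. -/
lemma exists_boundary_right {X : Set (Fin n)} {x w : Fin n} (hx : x ∈ X) (hw : w ∉ X) :
    ∃ a ∈ X, a + 1 ∉ X := by
  by_contra h
  push_neg at h
  have key : ∀ k : ℕ, x + (k : Fin n) ∈ X := by
    intro k
    induction k with
    | zero => simpa using hx
    | succ k ih =>
      have := h _ ih
      have hcast : ((k + 1 : ℕ) : Fin n) = (k : Fin n) + 1 := by push_cast; ring
      rw [hcast, ← add_assoc]
      exact this
  apply hw
  have := key (w - x).val
  rwa [Fin.cast_val_eq_self, add_sub_cancel] at this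

lemma exists_boundary_left {X : Set (Fin n)} {x w : Fin n} (hx : x ∈ X) (hw : w ∉ X) :
    ∃ b ∈ X, b - 1 ∉ X := by
  have hx' : -x ∈ {y : Fin n | -y ∈ X} := by simpa using hx
  have hw' : -w ∉ {y : Fin n | -y ∈ X} := by simpa using hw
  obtain ⟨a, ha, ha1⟩ := exists_boundary_right hx' hw'
  refine ⟨-a, ha, ?_⟩
  have : -a - 1 = -(a + 1) := by ring
  rw [this]
  simpa using ha1

end Helpers

/-- T_n is prime for every odd n ≥ 1. -/
theorem Tn_prime (n : ℕ) (hodd : Odd n) (h1 : 1 ≤ n) : IsPrime (Tn n) := by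
  haveI : NeZero n := ⟨by omega⟩
  obtain ⟨m, hm⟩ : ∃ m, n = 2 * m + 1 := by
    obtain ⟨k, hk⟩ := hodd; exact ⟨k, by omega⟩
  intro X hX
  by_contra hcon
  push_neg at hcon
  obtain ⟨hns, hne⟩ := hcon
  obtain ⟨p, hp, q, hq, hpq⟩ := hns
  obtain ⟨w, hw⟩ := (Set.ne_univ_iff_exists_notMem X).mp hne
  -- n = 1 is impossible since X is nontrivial
  have hm1 : 1 ≤ m := by
    rcases Nat.eq_zero_or_pos m with h0 | h; swap
    · exact h
    · exfalso; apply hpq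
      have := p.isLt; have := q.isLt
      apply Fin.ext; omega
  have hM : (n - 1) / 2 = m := by omega
  -- boundary points
  obtain ⟨a, ha, ha1⟩ := exists_boundary_right hp hw
  obtain ⟨b, hb, hb1⟩ := exists_boundary_left hp hw
  have hone : (1 : Fin n).val = 1 := by rw [Fin.val_one']; exact Nat.mod_eq_of_lt (by omega)
  -- a+1 loses to all of X
  have haX : ∀ x ∈ X, Tn n x (a + 1) := by
    have htnaa1 : Tn n a (a + 1) := by
      rw [tn_iff]
      have : a + 1 - a = 1 := by ring
      rw [this, hone]
      omega
    rcases hX _ ha1 with h | h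
    · exact absurd (h a ha) (fun hc => tn_asymm htnaa1 hc)
    · exact h
  -- b-1 beats all of X
  have hbX : ∀ x ∈ X, Tn n (b - 1) x := by
    have htnbb1 : Tn n (b - 1) b := by
      rw [tn_iff]
      have : b - (b - 1) = 1 := by ring
      rw [this, hone]
      omega
    rcases hX _ hb1 with h | h
    · exact h
    · exact absurd (h b hb) (fun hc => tn_asymm hc htnbb1)
  -- bound from the right boundary: X ⊆ {x | (a - x).val ≤ m - 1}
  have bound3 : ∀ x ∈ X, (a - x).val ≤ m - 1 := by
    intro x hx
    have h := (tn_iff _ _).mp (haX x hx)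
    rw [hM] at h
    have heq : a + 1 - x = (a - x) + 1 := by ring
    rw [heq] at h
    have e := fin_add_val_spec (a - x) 1
    rw [hone] at e
    have l := (a - x).isLt
    omega
  -- bound from the left boundary: X ⊆ {x | (x - b).val ≤ m - 1}
  have bound4 : ∀ x ∈ X, (x - b).val ≤ m - 1 := by
    intro x hx
    have h := (tn_iff _ _).mp (hbX x hx)
    rw [hM] at h
    have heq : x - (b - 1) = (x - b) + 1 := by ring
    rw [heq] at h
    have e := fin_add_val_spec (x - b) 1
    rw [hone] at e
    have l := (x - b).isLt
    omega
  -- nonzero differences have value ≥ 1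
  have hne_val : ∀ {u v : Fin n}, u ≠ v → 1 ≤ (u - v).val := by
    intro u v huv
    have : u - v ≠ 0 := sub_ne_zero.mpr huv
    have : (u - v).val ≠ 0 := fun hc => this (Fin.ext (by simp [hc]))
    omega
  by_cases hab : a = b
  · -- then X ⊆ tiny intersection, contradiction with nontriviality
    subst hab
    obtain ⟨c, hc, hca⟩ : ∃ c ∈ X, c ≠ a := by
      by_cases hpa : p = a
      · exact ⟨q, hq, fun h => hpq (by rw [hpa, h])⟩
      · exact ⟨p, hp, hpa⟩
    have h3 := bound3 c hc
    have h4 := bound4 c hc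
    have e1 := fin_sub_val_spec a c
    have e2 := fin_sub_val_spec c a
    have g1 := hne_val (Ne.symm hca)
    have g2 := hne_val hca
    have := a.isLt; have := c.isLt
    omega
  · set d := (a - b).val with hd
    have hd1 : 1 ≤ d := hne_val hab
    have hd2 : d ≤ m - 1 := bound4 a ha
    -- the splitting vertex
    set v : Fin n := a + (m : Fin n) with hv
    have hmval : ((m : ℕ) : Fin n).val = m := by
      rw [Fin.val_natCast]; exact Nat.mod_eq_of_lt (by omega)
    -- Tn a v
    have htav : Tn n a v := by
      rw [tn_iff, hM]
      have : v - a = (m : Fin n) := by rw [hv]; ring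
      rw [this, hmval]
      omega
    -- Tn v b
    have htvb : Tn n v b := by
      rw [tn_iff, hM]
      have heq : b - v = (b - a) - (m : Fin n) := by rw [hv]; ring
      rw [heq]
      have e1 := fin_sub_val_spec (b - a) ((m : ℕ) : Fin n)
      rw [hmval] at e1
      have e2 := fin_sub_val_spec b a
      have e3 := fin_sub_val_spec a b
      rw [← hd] at e3
      have g := hne_val (Ne.symm hab)
      have l1 := (b - a).isLt
      have l2 := ((b - a) - ((m : ℕ) : Fin n)).isLt
      have := a.isLt; have := b.isLt
      omega
    -- v ∉ X
    have hvX : v ∉ X := by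
      intro hvin
      have h4 := bound4 v hvin
      have heq : v - b = (a - b) + (m : Fin n) := by rw [hv]; ring
      rw [heq] at h4
      have e := fin_add_val_spec (a - b) ((m : ℕ) : Fin n)
      rw [hmval, ← hd] at e
      have l := ((a - b) + ((m : ℕ) : Fin n)).isLt
      omega
    rcases hX v hvX with h | h
    · exact tn_asymm htav (h a ha)
    · exact tn_asymm htvb (h b hb)
end

section
/- The tournament W_n is prime for every odd n ≥ 1. -/
/-- The tournament W_n: vertex 0 is v, vertex k (1 ≤ k ≤ n-1) is w_k;
w_i → w_j for i < j, w_i → v for even i, v → w_i for odd i. -/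
def Wn (n : ℕ) (i j : Fin n) : Prop :=
  if i.val = 0 then j.val % 2 = 1
  else if j.val = 0 then i.val % 2 = 0
  else i.val < j.val

lemma Wn_nz {n : ℕ} {i j : Fin n} (hi : i.val ≠ 0) (hj : j.val ≠ 0) :
    Wn n i j ↔ i.val < j.val := by simp [Wn, hi, hj]

lemma Wn_z {n : ℕ} {i j : Fin n} (hi : i.val = 0) :
    Wn n i j ↔ j.val % 2 = 1 := by simp [Wn, hi]

lemma Wn_j0 {n : ℕ} {i j : Fin n} (hi : i.val ≠ 0) (hj : j.val = 0) :
    Wn n i j ↔ i.val % 2 = 0 := by simp [Wn, hi, hj]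

/-- Helper: if the homogeneous set avoids vertex 0 and has two elements `a < b`,
we get a contradiction. -/
lemma Wn_caseA (n : ℕ) (h1 : 1 ≤ n) (X : Set (Fin n)) (hX : IsHomog (Wn n) X)
    (a b : Fin n) (ha : a ∈ X) (hb : b ∈ X) (hlt : a.val < b.val)
    (hz : (⟨0, h1⟩ : Fin n) ∉ X) : False := by
  have ha0 : a.val ≠ 0 := by
    intro h; exact hz (by rwa [show (⟨0, h1⟩ : Fin n) = a from Fin.ext h.symm])
  have hb0 : b.val ≠ 0 := by omega
  have hcn : a.val + 1 < n := by omega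
  set c : Fin n := ⟨a.val + 1, hcn⟩ with hcdef
  have hcval : c.val = a.val + 1 := rfl
  have hc0 : c.val ≠ 0 := by omega
  have hcX : c ∈ X := by
    by_cases hcb : c = b
    · rwa [hcb]
    have hcvb : c.val < b.val := by
      have : c.val ≠ b.val := fun h => hcb (Fin.ext h)
      omega
    by_contra hcX
    rcases hX c hcX with D | D
    · have := (Wn_nz hc0 ha0).mp (D a ha); omega
    · have := (Wn_nz hb0 hc0).mp (D b hb); omega
  rcases hX _ hz with D | D
  · have h1' := (Wn_z rfl).mp (D a ha)
    have h2' := (Wn_z rfl).mp (D c hcX)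
    omega
  · have h1' := (Wn_j0 ha0 rfl).mp (D a ha)
    have h2' := (Wn_j0 hc0 rfl).mp (D c hcX)
    omega

/-- W_n is prime for every odd n ≥ 1. -/
theorem Wn_prime (n : ℕ) (hodd : Odd n) (h1 : 1 ≤ n) : IsPrime (Wn n) := by
  intro X hX
  by_cases hss : X.Subsingleton
  · exact Or.inl hss
  rw [Set.not_subsingleton_iff] at hss
  obtain ⟨a, ha, b, hb, hab⟩ := hss
  have hvalne : a.val ≠ b.val := fun h => hab (Fin.ext h)
  have hn2 : n % 2 = 1 := Nat.odd_iff.mp hodd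
  by_cases hz : (⟨0, h1⟩ : Fin n) ∈ X
  · right
    ext c
    simp only [Set.mem_univ, iff_true]
    by_contra hc
    have hc0 : c.val ≠ 0 := by
      intro h; exact hc (by rwa [show c = (⟨0, h1⟩ : Fin n) from Fin.ext h])
    obtain ⟨w, hw, hw0⟩ : ∃ w ∈ X, w.val ≠ 0 := by
      rcases Nat.eq_zero_or_pos a.val with h | h
      · exact ⟨b, hb, by omega⟩
      · exact ⟨a, ha, by omega⟩
    rcases hX c hc with D | D
    · have hce : c.val % 2 = 0 := (Wn_j0 hc0 rfl).mp (D _ hz)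
      have hcw : c.val < w.val := (Wn_nz hc0 hw0).mp (D w hw)
      have hdn : c.val - 1 < n := by omega
      set d : Fin n := ⟨c.val - 1, hdn⟩ with hddef
      have hdval : d.val = c.val - 1 := rfl
      have hd0 : d.val ≠ 0 := by omega
      have hdX : d ∈ X := by
        by_contra hdX
        rcases hX d hdX with E | E
        · have := (Wn_j0 hd0 rfl).mp (E _ hz); omega
        · have := (Wn_nz hw0 hd0).mp (E w hw); omega
      have := (Wn_nz hc0 hd0).mp (D d hdX); omega
    · have hco : c.val % 2 = 1 := (Wn_z rfl).mp (D _ hz)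
      have hwc : w.val < c.val := (Wn_nz hw0 hc0).mp (D w hw)
      have hdn : c.val + 1 < n := by omega
      set d : Fin n := ⟨c.val + 1, hdn⟩ with hddef
      have hdval : d.val = c.val + 1 := rfl
      have hd0 : d.val ≠ 0 := by omega
      have hdX : d ∈ X := by
        by_contra hdX
        rcases hX d hdX with E | E
        · have := (Wn_nz hd0 hw0).mp (E w hw); omega
        · have := (Wn_z rfl).mp (E _ hz); omega
      have := (Wn_nz hd0 hc0).mp (D d hdX); omega
  · exfalso
    rcases Nat.lt_or_ge a.val b.val with h | h
    · exact Wn_caseA n h1 X hX a b ha hb h hz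
    · exact Wn_caseA n h1 X hX b a hb ha (by omega) hz
end

section
/- Let G be a strongly connected tournament with |V(G)| ≥ 3 whose vertex set is partitioned into sets X, Y, Z such that X ∪ Y, Y ∪ Z, and Z ∪ X are each transitive. Write X = {x_1,...,x_ℓ}, Y = {y_1,...,y_m}, Z = {z_1,...,z_n} with x_i → x_j for i < j and similarly for Y and Z. Then there exists a sequence C_1, ..., C_{|V(G)|−2} of cyclic triangles with C_1 = {x_1, y_1, z_1}, and whenever C_r = {x_i, y_j, z_k} with r < |V(G)|−2, C_{r+1} equals {x_{i+1}, y_j, z_k}, {x_i, y_{j+1}, z_k}, or {x_i, y_j, z_{k+1}}. -/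
/-- {a,b,c} is a cyclic triangle (in one of the two cyclic orientations). -/
def Cyc3 {V : Type*} (r : V → V → Prop) (a b c : V) : Prop :=
  (r a b ∧ r b c ∧ r c a) ∨ (r a c ∧ r c b ∧ r b a)

section Aux

variable {V : Type*} {r : V → V → Prop}

lemma asymAux (hT : IsTournament r) {a b : V} (hab : r a b) (hba : r b a) : False := by
  rcases eq_or_ne a b with rfl | hne
  · exact hT.1 a hab
  · exact (hT.2 a b hne).mp hab hba

lemma totAux (hT : IsTournament r) {a b : V} (h : ¬ r a b) (hne : a ≠ b) : r b a := by
  by_contra h'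
  exact h ((hT.2 a b hne).mpr h')

lemma transRAux (hT : IsTournament r) {S : Set V} (hS : IsTransOn r S) {a b c : V}
    (ha : a ∈ S) (hb : b ∈ S) (hc : c ∈ S) (hab : r a b) (hbc : r b c) : r a c := by
  by_contra h
  have hac : a ≠ c := by
    rintro rfl
    exact asymAux hT hab hbc
  exact hS a ha b hb c hc ⟨hab, hbc, totAux hT h hac⟩

lemma cyc3_commAux (hT : IsTournament r) {a b c : V} (h : Cyc3 r a b c) : Cyc3 r a c b := by
  rcases h with ⟨h1, h2, h3⟩ | ⟨h1, h2, h3⟩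
  · exact Or.inr ⟨h1, h2, h3⟩
  · exact Or.inl ⟨h1, h2, h3⟩

lemma chain_domAux (hT : IsTournament r) {S : Set V} (hS : IsTransOn r S) {ℓ : ℕ}
    {x : Fin ℓ → V} (hx : ∀ i j : Fin ℓ, i < j → r (x i) (x j))
    (hxS : ∀ p, x p ∈ S) {v : V} (hvS : v ∈ S) (h0 : 0 < ℓ)
    (hv0 : r v (x ⟨0, h0⟩)) : ∀ p, r v (x p) := by
  intro p
  rcases Nat.eq_zero_or_pos p.val with hp | hp
  · have : p = ⟨0, h0⟩ := Fin.ext hp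
    rw [this]; exact hv0
  · exact transRAux hT hS hvS (hxS _) (hxS _) hv0 (hx _ _ (by rw [Fin.lt_def]; exact hp))

lemma no_sourceAux [Fintype V] (hT : IsTournament r)
    (hconn : ∀ u v : V, Relation.ReflTransGen r u v) (hcard : 2 ≤ Fintype.card V)
    (s : V) (hs : ∀ v, v ≠ s → r s v) : False := by
  obtain ⟨v, hv⟩ := Fintype.exists_ne_of_one_lt_card (by omega) s
  rcases (hconn v s).cases_tail with h | ⟨w, _, e⟩
  · exact hv h.symm
  · have hws : w ≠ s := fun e' => hT.1 s (e' ▸ e)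
    exact asymAux hT (hs w hws) e

lemma pos_auxAux [Fintype V] (hT : IsTournament r)
    (hconn : ∀ u v : V, Relation.ReflTransGen r u v) (hcard : 3 ≤ Fintype.card V)
    {ℓ m : ℕ} (x : Fin ℓ → V) (y : Fin m → V)
    (hsurj : ∀ v, (∃ p, x p = v) ∨ (∃ q, y q = v))
    (hx : ∀ i j : Fin ℓ, i < j → r (x i) (x j))
    (hy : ∀ i j : Fin m, i < j → r (y i) (y j))
    (hXY : IsTransOn r (Set.range x ∪ Set.range y)) : False := by
  have mx : ∀ p : Fin ℓ, x p ∈ Set.range x ∪ Set.range y :=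
    fun p => Set.mem_union_left _ ⟨p, rfl⟩
  have my : ∀ q : Fin m, y q ∈ Set.range x ∪ Set.range y :=
    fun q => Set.mem_union_right _ ⟨q, rfl⟩
  rcases Nat.eq_zero_or_pos ℓ with hℓ | hℓ
  · rcases Nat.eq_zero_or_pos m with hm | hm
    · obtain ⟨v⟩ : Nonempty V := Fintype.card_pos_iff.mp (by omega)
      rcases hsurj v with ⟨p, _⟩ | ⟨q, _⟩
      · exact absurd p.isLt (by omega)
      · exact absurd q.isLt (by omega)
    · refine no_sourceAux hT hconn (by omega) (y ⟨0, hm⟩) ?_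
      intro v hv
      rcases hsurj v with ⟨p, rfl⟩ | ⟨q, rfl⟩
      · exact absurd p.isLt (by omega)
      · have hq : (0 : ℕ) < q.val := by
          rcases Nat.eq_zero_or_pos q.val with h0 | h0
          · exact (hv (congrArg y (Fin.ext h0))).elim
          · exact h0
        exact hy _ _ (by rw [Fin.lt_def]; exact hq)
  · rcases Nat.eq_zero_or_pos m with hm | hm
    · refine no_sourceAux hT hconn (by omega) (x ⟨0, hℓ⟩) ?_
      intro v hv
      rcases hsurj v with ⟨p, rfl⟩ | ⟨q, rfl⟩
      · have hp : (0 : ℕ) < p.val := by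
          rcases Nat.eq_zero_or_pos p.val with h0 | h0
          · exact (hv (congrArg x (Fin.ext h0))).elim
          · exact h0
        exact hx _ _ (by rw [Fin.lt_def]; exact hp)
      · exact absurd q.isLt (by omega)
    · by_cases h : r (x ⟨0, hℓ⟩) (y ⟨0, hm⟩)
      · refine no_sourceAux hT hconn (by omega) (x ⟨0, hℓ⟩) ?_
        intro v hv
        rcases hsurj v with ⟨p, rfl⟩ | ⟨q, rfl⟩
        · have hp : (0 : ℕ) < p.val := by
            rcases Nat.eq_zero_or_pos p.val with h0 | h0
            · exact (hv (congrArg x (Fin.ext h0))).elim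
            · exact h0
          exact hx _ _ (by rw [Fin.lt_def]; exact hp)
        · exact chain_domAux hT hXY hy my (mx _) hm h q
      · by_cases heq : x ⟨0, hℓ⟩ = y ⟨0, hm⟩
        · refine no_sourceAux hT hconn (by omega) (x ⟨0, hℓ⟩) ?_
          intro v hv
          rcases hsurj v with ⟨p, rfl⟩ | ⟨q, rfl⟩
          · have hp : (0 : ℕ) < p.val := by
              rcases Nat.eq_zero_or_pos p.val with h0 | h0
              · exact (hv (congrArg x (Fin.ext h0))).elim
              · exact h0
            exact hx _ _ (by rw [Fin.lt_def]; exact hp)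
          · have hq : (0 : ℕ) < q.val := by
              rcases Nat.eq_zero_or_pos q.val with h0 | h0
              · exact (hv ((heq.trans (congrArg y (Fin.ext h0.symm))).symm)).elim
              · exact h0
            rw [heq]
            exact hy _ _ (by rw [Fin.lt_def]; exact hq)
        · have h' : r (y ⟨0, hm⟩) (x ⟨0, hℓ⟩) := totAux hT h heq
          refine no_sourceAux hT hconn (by omega) (y ⟨0, hm⟩) ?_
          intro v hv
          rcases hsurj v with ⟨p, rfl⟩ | ⟨q, rfl⟩
          · exact chain_domAux hT hXY hx mx (my _) hℓ h' p
          · have hq : (0 : ℕ) < q.val := by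
              rcases Nat.eq_zero_or_pos q.val with h0 | h0
              · exact (hv (congrArg y (Fin.ext h0))).elim
              · exact h0
            exact hy _ _ (by rw [Fin.lt_def]; exact hq)

lemma step_auxAux (hT : IsTournament r)
    (hconn : ∀ u v : V, Relation.ReflTransGen r u v)
    {ℓ m n : ℕ} (x : Fin ℓ → V) (y : Fin m → V) (z : Fin n → V)
    (hsurj : ∀ v, (∃ p, x p = v) ∨ (∃ q, y q = v) ∨ (∃ s, z s = v))
    (hx : ∀ i j : Fin ℓ, i < j → r (x i) (x j))
    (hy : ∀ i j : Fin m, i < j → r (y i) (y j))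
    (hz : ∀ i j : Fin n, i < j → r (z i) (z j))
    (hXY : IsTransOn r (Set.range x ∪ Set.range y))
    (hYZ : IsTransOn r (Set.range y ∪ Set.range z))
    (hZX : IsTransOn r (Set.range z ∪ Set.range x))
    (i : Fin ℓ) (j : Fin m) (k : Fin n)
    (h1 : r (x i) (y j)) (h2 : r (y j) (z k)) (h3 : r (z k) (x i))
    (hne : i.val + 1 < ℓ ∨ j.val + 1 < m ∨ k.val + 1 < n) :
    (∃ i' : Fin ℓ, i'.val = i.val + 1 ∧ Cyc3 r (x i') (y j) (z k)) ∨
    (∃ j' : Fin m, j'.val = j.val + 1 ∧ Cyc3 r (x i) (y j') (z k)) ∨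
    (∃ k' : Fin n, k'.val = k.val + 1 ∧ Cyc3 r (x i) (y j) (z k')) := by
  by_contra hcon
  push_neg at hcon
  obtain ⟨hc1, hc2, hc3⟩ := hcon
  have mXY_x : ∀ p : Fin ℓ, x p ∈ Set.range x ∪ Set.range y :=
    fun p => Set.mem_union_left _ ⟨p, rfl⟩
  have mXY_y : ∀ q : Fin m, y q ∈ Set.range x ∪ Set.range y :=
    fun q => Set.mem_union_right _ ⟨q, rfl⟩
  have mYZ_y : ∀ q : Fin m, y q ∈ Set.range y ∪ Set.range z :=
    fun q => Set.mem_union_left _ ⟨q, rfl⟩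
  have mYZ_z : ∀ s : Fin n, z s ∈ Set.range y ∪ Set.range z :=
    fun s => Set.mem_union_right _ ⟨s, rfl⟩
  have mZX_z : ∀ s : Fin n, z s ∈ Set.range z ∪ Set.range x :=
    fun s => Set.mem_union_left _ ⟨s, rfl⟩
  have mZX_x : ∀ p : Fin ℓ, x p ∈ Set.range z ∪ Set.range x :=
    fun p => Set.mem_union_right _ ⟨p, rfl⟩
  have hyx' : ∀ hl : i.val + 1 < ℓ, r (y j) (x ⟨i.val + 1, hl⟩) := by
    intro hl
    have hlt : i < (⟨i.val + 1, hl⟩ : Fin ℓ) := by rw [Fin.lt_def]; exact Nat.lt_succ_self _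
    have hzx' : r (z k) (x ⟨i.val + 1, hl⟩) :=
      transRAux hT hZX (mZX_z k) (mZX_x i) (mZX_x _) h3 (hx _ _ hlt)
    have hncyc := hc1 ⟨i.val + 1, hl⟩ rfl
    have hnr : ¬ r (x ⟨i.val + 1, hl⟩) (y j) := fun hr => hncyc (Or.inl ⟨hr, h2, hzx'⟩)
    refine totAux hT hnr fun e => ?_
    exact asymAux hT h2 (e ▸ hzx')
  have hzy' : ∀ hm' : j.val + 1 < m, r (z k) (y ⟨j.val + 1, hm'⟩) := by
    intro hm'
    have hlt : j < (⟨j.val + 1, hm'⟩ : Fin m) := by rw [Fin.lt_def]; exact Nat.lt_succ_self _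
    have hxy' : r (x i) (y ⟨j.val + 1, hm'⟩) :=
      transRAux hT hXY (mXY_x i) (mXY_y j) (mXY_y _) h1 (hy _ _ hlt)
    have hncyc := hc2 ⟨j.val + 1, hm'⟩ rfl
    have hnr : ¬ r (y ⟨j.val + 1, hm'⟩) (z k) := fun hr => hncyc (Or.inl ⟨hxy', hr, h3⟩)
    refine totAux hT hnr fun e => ?_
    exact asymAux hT h3 (e ▸ hxy')
  have hxz' : ∀ hn' : k.val + 1 < n, r (x i) (z ⟨k.val + 1, hn'⟩) := by
    intro hn'
    have hlt : k < (⟨k.val + 1, hn'⟩ : Fin n) := by rw [Fin.lt_def]; exact Nat.lt_succ_self _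
    have hyz' : r (y j) (z ⟨k.val + 1, hn'⟩) :=
      transRAux hT hYZ (mYZ_y j) (mYZ_z k) (mYZ_z _) h2 (hz _ _ hlt)
    have hncyc := hc3 ⟨k.val + 1, hn'⟩ rfl
    have hnr : ¬ r (z ⟨k.val + 1, hn'⟩) (x i) := fun hr => hncyc (Or.inl ⟨h1, hyz', hr⟩)
    refine totAux hT hnr fun e => ?_
    exact asymAux hT h1 (e ▸ hyz')
  let Q : V → Prop := fun v =>
    (∀ p : Fin ℓ, p.val ≤ i.val → r (x p) v) ∧ (∀ q : Fin m, q.val ≤ j.val → r (y q) v) ∧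
      (∀ s : Fin n, s.val ≤ k.val → r (z s) v)
  have hQx : ∀ p : Fin ℓ, i < p → Q (x p) := by
    intro p hip
    have hip' := Fin.lt_def.mp hip
    have hl : i.val + 1 < ℓ := by have := p.isLt; omega
    have hyx := hyx' hl
    refine ⟨?_, ?_, ?_⟩
    · intro p' hp'
      exact hx _ _ (by rw [Fin.lt_def]; omega)
    · intro q hq
      have h1' : r (y q) (x ⟨i.val + 1, hl⟩) := by
        rcases Nat.lt_or_ge q.val j.val with hlt | hge
        · exact transRAux hT hXY (mXY_y q) (mXY_y j) (mXY_x _)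
            (hy _ _ (by rw [Fin.lt_def]; exact hlt)) hyx
        · have hqe : q = j := Fin.ext (le_antisymm hq hge)
          rw [hqe]; exact hyx
      rcases Nat.lt_or_ge (i.val + 1) p.val with hlt | hge
      · exact transRAux hT hXY (mXY_y q) (mXY_x _) (mXY_x p) h1'
          (hx _ _ (by rw [Fin.lt_def]; exact hlt))
      · have hpe : p = ⟨i.val + 1, hl⟩ := Fin.ext (show p.val = i.val + 1 by omega)
        rw [hpe]; exact h1'
    · intro s hs
      have h2' : r (z s) (x i) := by
        rcases Nat.lt_or_ge s.val k.val with hlt | hge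
        · exact transRAux hT hZX (mZX_z s) (mZX_z k) (mZX_x i)
            (hz _ _ (by rw [Fin.lt_def]; exact hlt)) h3
        · have hse : s = k := Fin.ext (le_antisymm hs hge)
          rw [hse]; exact h3
      exact transRAux hT hZX (mZX_z s) (mZX_x i) (mZX_x p) h2' (hx _ _ hip)
  have hQy : ∀ q : Fin m, j < q → Q (y q) := by
    intro q hjq
    have hjq' := Fin.lt_def.mp hjq
    have hm' : j.val + 1 < m := by have := q.isLt; omega
    have hzy := hzy' hm'
    refine ⟨?_, ?_, ?_⟩
    · intro p hp
      have h1' : r (x p) (y j) := by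
        rcases Nat.lt_or_ge p.val i.val with hlt | hge
        · exact transRAux hT hXY (mXY_x p) (mXY_x i) (mXY_y j)
            (hx _ _ (by rw [Fin.lt_def]; exact hlt)) h1
        · have hpe : p = i := Fin.ext (le_antisymm hp hge)
          rw [hpe]; exact h1
      exact transRAux hT hXY (mXY_x p) (mXY_y j) (mXY_y q) h1' (hy _ _ hjq)
    · intro q' hq'
      exact hy _ _ (by rw [Fin.lt_def]; omega)
    · intro s hs
      have h2' : r (z s) (y ⟨j.val + 1, hm'⟩) := by
        rcases Nat.lt_or_ge s.val k.val with hlt | hge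
        · exact transRAux hT hYZ (mYZ_z s) (mYZ_z k) (mYZ_y _)
            (hz _ _ (by rw [Fin.lt_def]; exact hlt)) hzy
        · have hse : s = k := Fin.ext (le_antisymm hs hge)
          rw [hse]; exact hzy
      rcases Nat.lt_or_ge (j.val + 1) q.val with hlt | hge
      · exact transRAux hT hYZ (mYZ_z s) (mYZ_y _) (mYZ_y q) h2'
          (hy _ _ (by rw [Fin.lt_def]; exact hlt))
      · have hqe : q = ⟨j.val + 1, hm'⟩ := Fin.ext (show q.val = j.val + 1 by omega)
        rw [hqe]; exact h2'
  have hQz : ∀ s : Fin n, k < s → Q (z s) := by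
    intro s hks
    have hks' := Fin.lt_def.mp hks
    have hn' : k.val + 1 < n := by have := s.isLt; omega
    have hxz := hxz' hn'
    refine ⟨?_, ?_, ?_⟩
    · intro p hp
      have h1' : r (x p) (z ⟨k.val + 1, hn'⟩) := by
        rcases Nat.lt_or_ge p.val i.val with hlt | hge
        · exact transRAux hT hZX (mZX_x p) (mZX_x i) (mZX_z _)
            (hx _ _ (by rw [Fin.lt_def]; exact hlt)) hxz
        · have hpe : p = i := Fin.ext (le_antisymm hp hge)
          rw [hpe]; exact hxz
      rcases Nat.lt_or_ge (k.val + 1) s.val with hlt | hge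
      · exact transRAux hT hZX (mZX_x p) (mZX_z _) (mZX_z s) h1'
          (hz _ _ (by rw [Fin.lt_def]; exact hlt))
      · have hse : s = ⟨k.val + 1, hn'⟩ := Fin.ext (show s.val = k.val + 1 by omega)
        rw [hse]; exact h1'
    · intro q hq
      have h2' : r (y q) (z k) := by
        rcases Nat.lt_or_ge q.val j.val with hlt | hge
        · exact transRAux hT hYZ (mYZ_y q) (mYZ_y j) (mYZ_z k)
            (hy _ _ (by rw [Fin.lt_def]; exact hlt)) h2
        · have hqe : q = j := Fin.ext (le_antisymm hq hge)
          rw [hqe]; exact h2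
      exact transRAux hT hYZ (mYZ_y q) (mYZ_z k) (mYZ_z s) h2' (hz _ _ hks)
    · intro s' hs'
      exact hz _ _ (by rw [Fin.lt_def]; omega)
  have hprop : ∀ v w, Q v → r v w → Q w := by
    intro v w hQv hvw
    rcases hsurj w with ⟨p, rfl⟩ | ⟨q, rfl⟩ | ⟨s, rfl⟩
    · rcases Nat.lt_or_ge i.val p.val with hlt | hge
      · exact hQx p (by rw [Fin.lt_def]; exact hlt)
      · exact (asymAux hT hvw (hQv.1 p hge)).elim
    · rcases Nat.lt_or_ge j.val q.val with hlt | hge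
      · exact hQy q (by rw [Fin.lt_def]; exact hlt)
      · exact (asymAux hT hvw (hQv.2.1 q hge)).elim
    · rcases Nat.lt_or_ge k.val s.val with hlt | hge
      · exact hQz s (by rw [Fin.lt_def]; exact hlt)
      · exact (asymAux hT hvw (hQv.2.2 s hge)).elim
  obtain ⟨b, hQb⟩ : ∃ b, Q b := by
    rcases hne with hl | hm' | hn'
    · exact ⟨x ⟨i.val + 1, hl⟩, hQx _ (by rw [Fin.lt_def]; exact Nat.lt_succ_self _)⟩
    · exact ⟨y ⟨j.val + 1, hm'⟩, hQy _ (by rw [Fin.lt_def]; exact Nat.lt_succ_self _)⟩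
    · exact ⟨z ⟨k.val + 1, hn'⟩, hQz _ (by rw [Fin.lt_def]; exact Nat.lt_succ_self _)⟩
  have hreach : ∀ v, Relation.ReflTransGen r b v → Q v := by
    intro v h
    induction h with
    | refl => exact hQb
    | tail _ e ih => exact hprop _ _ ih e
  exact hT.1 (x i) ((hreach (x i) (hconn b (x i))).1 i le_rfl)

attribute [local instance] Classical.propDecidable

noncomputable def iterChoiceAux {α : Type*} (R : α → α → Prop) (a0 : α) : ℕ → α
  | 0 => a0
  | t + 1 =>
    if h : ∃ b, R (iterChoiceAux R a0 t) b then h.choose else iterChoiceAux R a0 t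

lemma iterChoiceAux_succ {α : Type*} (R : α → α → Prop) (a0 : α) (t : ℕ)
    (h : ∃ b, R (iterChoiceAux R a0 t) b) :
    R (iterChoiceAux R a0 t) (iterChoiceAux R a0 (t + 1)) := by
  have he : iterChoiceAux R a0 (t + 1) =
      if h : ∃ b, R (iterChoiceAux R a0 t) b then h.choose else iterChoiceAux R a0 t := rfl
  rw [he, dif_pos h]
  exact h.choose_spec

end Aux

/-- Sequence of cyclic triangles in a strongly connected tournament partitioned
into three pairwise-transitive sets. -/
theorem triangle_sequence {V : Type*} [Fintype V] (r : V → V → Prop)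
    (hT : IsTournament r)
    (hconn : ∀ u v : V, Relation.ReflTransGen r u v)
    (hcard : 3 ≤ Fintype.card V)
    {ℓ m n : ℕ} (x : Fin ℓ → V) (y : Fin m → V) (z : Fin n → V)
    (hbij : Function.Bijective (Sum.elim x (Sum.elim y z)))
    (hx : ∀ i j : Fin ℓ, i < j → r (x i) (x j))
    (hy : ∀ i j : Fin m, i < j → r (y i) (y j))
    (hz : ∀ i j : Fin n, i < j → r (z i) (z j))
    (hXY : IsTransOn r (Set.range x ∪ Set.range y))
    (hYZ : IsTransOn r (Set.range y ∪ Set.range z))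
    (hZX : IsTransOn r (Set.range z ∪ Set.range x)) :
    ∃ C : Fin (Fintype.card V - 2) → Fin ℓ × Fin m × Fin n,
      ((C ⟨0, by omega⟩).1.val = 0 ∧ (C ⟨0, by omega⟩).2.1.val = 0 ∧
        (C ⟨0, by omega⟩).2.2.val = 0) ∧
      (∀ t, Cyc3 r (x (C t).1) (y (C t).2.1) (z (C t).2.2)) ∧
      (∀ t : ℕ, ∀ h : t + 1 < Fintype.card V - 2,
        ((C ⟨t + 1, h⟩).1.val = (C ⟨t, by omega⟩).1.val + 1 ∧
          (C ⟨t + 1, h⟩).2.1 = (C ⟨t, by omega⟩).2.1 ∧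
          (C ⟨t + 1, h⟩).2.2 = (C ⟨t, by omega⟩).2.2) ∨
        ((C ⟨t + 1, h⟩).1 = (C ⟨t, by omega⟩).1 ∧
          (C ⟨t + 1, h⟩).2.1.val = (C ⟨t, by omega⟩).2.1.val + 1 ∧
          (C ⟨t + 1, h⟩).2.2 = (C ⟨t, by omega⟩).2.2) ∨
        ((C ⟨t + 1, h⟩).1 = (C ⟨t, by omega⟩).1 ∧
          (C ⟨t + 1, h⟩).2.1 = (C ⟨t, by omega⟩).2.1 ∧
          (C ⟨t + 1, h⟩).2.2.val = (C ⟨t, by omega⟩).2.2.val + 1)) := by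
  classical
  obtain ⟨hinj, hsurj0⟩ := hbij
  have hsurj : ∀ v, (∃ p, x p = v) ∨ (∃ q, y q = v) ∨ (∃ s, z s = v) := by
    intro v
    obtain ⟨u, hu⟩ := hsurj0 v
    rcases u with p | q | s
    · exact Or.inl ⟨p, hu⟩
    · exact Or.inr (Or.inl ⟨q, hu⟩)
    · exact Or.inr (Or.inr ⟨s, hu⟩)
  have card_eq : ℓ + (m + n) = Fintype.card V := by
    have := Fintype.card_of_bijective ⟨hinj, hsurj0⟩
    simpa using this
  -- positivity
  have hn : 0 < n := by
    rcases Nat.eq_zero_or_pos n with h0 | h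
    · subst h0
      exact (pos_auxAux hT hconn hcard x y (by
        intro v
        rcases hsurj v with h | h | ⟨s, _⟩
        · exact Or.inl h
        · exact Or.inr h
        · exact s.elim0) hx hy hXY).elim
    · exact h
  have hℓ : 0 < ℓ := by
    rcases Nat.eq_zero_or_pos ℓ with h0 | h
    · subst h0
      exact (pos_auxAux hT hconn hcard y z (by
        intro v
        rcases hsurj v with ⟨p, _⟩ | h | h
        · exact p.elim0
        · exact Or.inl h
        · exact Or.inr h) hy hz hYZ).elim
    · exact h
  have hm : 0 < m := by
    rcases Nat.eq_zero_or_pos m with h0 | h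
    · subst h0
      exact (pos_auxAux hT hconn hcard z x (by
        intro v
        rcases hsurj v with h | ⟨q, _⟩ | h
        · exact Or.inr h
        · exact q.elim0
        · exact Or.inl h) hz hx hZX).elim
    · exact h
  -- distinctness of the three initial vertices
  have hab : x ⟨0, hℓ⟩ ≠ y ⟨0, hm⟩ := fun e => by
    have := hinj (a₁ := Sum.inl ⟨0, hℓ⟩) (a₂ := Sum.inr (Sum.inl ⟨0, hm⟩)) e
    simp at this
  have hbc : y ⟨0, hm⟩ ≠ z ⟨0, hn⟩ := fun e => by
    have := hinj (a₁ := Sum.inr (Sum.inl ⟨0, hm⟩)) (a₂ := Sum.inr (Sum.inr ⟨0, hn⟩)) e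
    simp at this
  have hac : x ⟨0, hℓ⟩ ≠ z ⟨0, hn⟩ := fun e => by
    have := hinj (a₁ := Sum.inl ⟨0, hℓ⟩) (a₂ := Sum.inr (Sum.inr ⟨0, hn⟩)) e
    simp at this
  have mXY_x : ∀ p : Fin ℓ, x p ∈ Set.range x ∪ Set.range y :=
    fun p => Set.mem_union_left _ ⟨p, rfl⟩
  have mXY_y : ∀ q : Fin m, y q ∈ Set.range x ∪ Set.range y :=
    fun q => Set.mem_union_right _ ⟨q, rfl⟩
  have mYZ_y : ∀ q : Fin m, y q ∈ Set.range y ∪ Set.range z :=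
    fun q => Set.mem_union_left _ ⟨q, rfl⟩
  have mYZ_z : ∀ s : Fin n, z s ∈ Set.range y ∪ Set.range z :=
    fun s => Set.mem_union_right _ ⟨s, rfl⟩
  have mZX_z : ∀ s : Fin n, z s ∈ Set.range z ∪ Set.range x :=
    fun s => Set.mem_union_left _ ⟨s, rfl⟩
  have mZX_x : ∀ p : Fin ℓ, x p ∈ Set.range z ∪ Set.range x :=
    fun p => Set.mem_union_right _ ⟨p, rfl⟩
  -- base triangle
  have srcA : r (x ⟨0, hℓ⟩) (y ⟨0, hm⟩) → r (x ⟨0, hℓ⟩) (z ⟨0, hn⟩) → False := by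
    intro e1 e2
    refine no_sourceAux hT hconn (by omega) (x ⟨0, hℓ⟩) ?_
    intro v hv
    rcases hsurj v with ⟨p, rfl⟩ | ⟨q, rfl⟩ | ⟨s, rfl⟩
    · have hp : (0 : ℕ) < p.val := by
        rcases Nat.eq_zero_or_pos p.val with h0 | h0
        · exact (hv (congrArg x (Fin.ext h0))).elim
        · exact h0
      exact hx _ _ (by rw [Fin.lt_def]; exact hp)
    · exact chain_domAux hT hXY hy mXY_y (mXY_x _) hm e1 q
    · exact chain_domAux hT hZX hz mZX_z (mZX_x _) hn e2 s
  have srcB : r (y ⟨0, hm⟩) (x ⟨0, hℓ⟩) → r (y ⟨0, hm⟩) (z ⟨0, hn⟩) → False := by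
    intro e1 e2
    refine no_sourceAux hT hconn (by omega) (y ⟨0, hm⟩) ?_
    intro v hv
    rcases hsurj v with ⟨p, rfl⟩ | ⟨q, rfl⟩ | ⟨s, rfl⟩
    · exact chain_domAux hT hXY hx mXY_x (mXY_y _) hℓ e1 p
    · have hq : (0 : ℕ) < q.val := by
        rcases Nat.eq_zero_or_pos q.val with h0 | h0
        · exact (hv (congrArg y (Fin.ext h0))).elim
        · exact h0
      exact hy _ _ (by rw [Fin.lt_def]; exact hq)
    · exact chain_domAux hT hYZ hz mYZ_z (mYZ_y _) hn e2 s
  have srcC : r (z ⟨0, hn⟩) (x ⟨0, hℓ⟩) → r (z ⟨0, hn⟩) (y ⟨0, hm⟩) → False := by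
    intro e1 e2
    refine no_sourceAux hT hconn (by omega) (z ⟨0, hn⟩) ?_
    intro v hv
    rcases hsurj v with ⟨p, rfl⟩ | ⟨q, rfl⟩ | ⟨s, rfl⟩
    · exact chain_domAux hT hZX hx mZX_x (mZX_z _) hℓ e1 p
    · exact chain_domAux hT hYZ hy mYZ_y (mYZ_z _) hm e2 q
    · have hs : (0 : ℕ) < s.val := by
        rcases Nat.eq_zero_or_pos s.val with h0 | h0
        · exact (hv (congrArg z (Fin.ext h0))).elim
        · exact h0
      exact hz _ _ (by rw [Fin.lt_def]; exact hs)
  have base : Cyc3 r (x ⟨0, hℓ⟩) (y ⟨0, hm⟩) (z ⟨0, hn⟩) := by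
    by_cases e1 : r (x ⟨0, hℓ⟩) (y ⟨0, hm⟩)
    · by_cases e2 : r (y ⟨0, hm⟩) (z ⟨0, hn⟩)
      · by_cases e3 : r (z ⟨0, hn⟩) (x ⟨0, hℓ⟩)
        · exact Or.inl ⟨e1, e2, e3⟩
        · exact (srcA e1 (totAux hT e3 (Ne.symm hac))).elim
      · have e2' : r (z ⟨0, hn⟩) (y ⟨0, hm⟩) := totAux hT e2 hbc
        by_cases e3 : r (z ⟨0, hn⟩) (x ⟨0, hℓ⟩)
        · exact (srcC e3 e2').elim
        · exact (srcA e1 (totAux hT e3 (Ne.symm hac))).elim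
    · have e1' : r (y ⟨0, hm⟩) (x ⟨0, hℓ⟩) := totAux hT e1 hab
      by_cases e2 : r (y ⟨0, hm⟩) (z ⟨0, hn⟩)
      · exact (srcB e1' e2).elim
      · have e2' : r (z ⟨0, hn⟩) (y ⟨0, hm⟩) := totAux hT e2 hbc
        by_cases e3 : r (z ⟨0, hn⟩) (x ⟨0, hℓ⟩)
        · exact (srcC e3 e2').elim
        · exact Or.inr ⟨totAux hT e3 (Ne.symm hac), e2', e1'⟩
  -- step relation
  have hXZ : IsTransOn r (Set.range x ∪ Set.range z) := by
    rw [Set.union_comm]; exact hZX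
  have hZY : IsTransOn r (Set.range z ∪ Set.range y) := by
    rw [Set.union_comm]; exact hYZ
  have hYX : IsTransOn r (Set.range y ∪ Set.range x) := by
    rw [Set.union_comm]; exact hXY
  let Rstep : (Fin ℓ × Fin m × Fin n) → (Fin ℓ × Fin m × Fin n) → Prop := fun p q =>
    Cyc3 r (x q.1) (y q.2.1) (z q.2.2) ∧
      ((q.1.val = p.1.val + 1 ∧ q.2.1 = p.2.1 ∧ q.2.2 = p.2.2) ∨
       (q.1 = p.1 ∧ q.2.1.val = p.2.1.val + 1 ∧ q.2.2 = p.2.2) ∨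
       (q.1 = p.1 ∧ q.2.1 = p.2.1 ∧ q.2.2.val = p.2.2.val + 1))
  have hstep : ∀ p : Fin ℓ × Fin m × Fin n, Cyc3 r (x p.1) (y p.2.1) (z p.2.2) →
      p.1.val + p.2.1.val + p.2.2.val + 3 < ℓ + (m + n) → ∃ q, Rstep p q := by
    rintro ⟨i, j, k⟩ hc hlt
    have hne2 : i.val + 1 < ℓ ∨ j.val + 1 < m ∨ k.val + 1 < n := by
      have := i.isLt; have := j.isLt; have := k.isLt
      simp only at hlt
      omega
    rcases hc with ⟨h1, h2, h3⟩ | ⟨h1, h2, h3⟩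
    · rcases step_auxAux hT hconn x y z hsurj hx hy hz hXY hYZ hZX i j k h1 h2 h3 hne2 with
        ⟨i', hv, hc'⟩ | ⟨j', hv, hc'⟩ | ⟨k', hv, hc'⟩
      · exact ⟨(i', j, k), hc', Or.inl ⟨hv, rfl, rfl⟩⟩
      · exact ⟨(i, j', k), hc', Or.inr (Or.inl ⟨rfl, hv, rfl⟩)⟩
      · exact ⟨(i, j, k'), hc', Or.inr (Or.inr ⟨rfl, rfl, hv⟩)⟩
    · have hsurj' : ∀ v, (∃ p, x p = v) ∨ (∃ s, z s = v) ∨ (∃ q, y q = v) := by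
        intro v
        rcases hsurj v with h | h | h
        · exact Or.inl h
        · exact Or.inr (Or.inr h)
        · exact Or.inr (Or.inl h)
      rcases step_auxAux hT hconn x z y hsurj' hx hz hy hXZ hZY hYX i k j h1 h2 h3
          (by tauto) with
        ⟨i', hv, hc'⟩ | ⟨k', hv, hc'⟩ | ⟨j', hv, hc'⟩
      · exact ⟨(i', j, k), cyc3_commAux hT hc', Or.inl ⟨hv, rfl, rfl⟩⟩
      · exact ⟨(i, j, k'), cyc3_commAux hT hc', Or.inr (Or.inr ⟨rfl, rfl, hv⟩)⟩
      · exact ⟨(i, j', k), cyc3_commAux hT hc', Or.inr (Or.inl ⟨rfl, hv, rfl⟩)⟩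
  let g : ℕ → Fin ℓ × Fin m × Fin n := iterChoiceAux Rstep (⟨0, hℓ⟩, ⟨0, hm⟩, ⟨0, hn⟩)
  have hInv : ∀ t, t + 3 ≤ ℓ + (m + n) →
      Cyc3 r (x (g t).1) (y (g t).2.1) (z (g t).2.2) ∧
      (g t).1.val + (g t).2.1.val + (g t).2.2.val = t := by
    intro t
    induction t with
    | zero => exact fun _ => ⟨base, rfl⟩
    | succ t ih =>
      intro hle
      obtain ⟨hc, hsum⟩ := ih (by omega)
      have hex : ∃ q, Rstep (g t) q := hstep (g t) hc (by omega)
      have hspec : Rstep (g t) (g (t + 1)) :=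
        iterChoiceAux_succ Rstep (⟨0, hℓ⟩, ⟨0, hm⟩, ⟨0, hn⟩) t hex
      refine ⟨hspec.1, ?_⟩
      rcases hspec.2 with ⟨e1, e2, e3⟩ | ⟨e1, e2, e3⟩ | ⟨e1, e2, e3⟩
      · have := congrArg Fin.val e2; have := congrArg Fin.val e3; omega
      · have := congrArg Fin.val e1; have := congrArg Fin.val e3; omega
      · have := congrArg Fin.val e1; have := congrArg Fin.val e2; omega
  refine ⟨fun t => g t.val, ⟨rfl, rfl, rfl⟩, ?_, ?_⟩
  · intro t
    have ht := t.isLt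
    exact (hInv t.val (by omega)).1
  · intro t h
    have hc := (hInv t (by omega)).1
    have hex : ∃ q, Rstep (g t) q := hstep (g t) hc (by
      have := (hInv t (by omega)).2
      omega)
    have hspec : Rstep (g t) (g (t + 1)) :=
      iterChoiceAux_succ Rstep (⟨0, hℓ⟩, ⟨0, hm⟩, ⟨0, hn⟩) t hex
    exact hspec.2
end

section
/- Let G be a tournament that is both T_5-free and U_5-free, let v ∈ V(G), and let C = {x, y, z} ⊆ V(G)\{v} be a cyclic triangle. If exactly one vertex of C is a successor of v, and u ∈ V(G)\{v} satisfies u → x, u → y, and u → z, then u is a predecessor of v. -/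
/-- T_5: vertices 0,...,4 (v_k = k-1), with i → j iff j - i ≡ 1 or 2 (mod 5). -/
def T5 (i j : Fin 5) : Prop :=
  (j.val + 5 - i.val) % 5 = 1 ∨ (j.val + 5 - i.val) % 5 = 2

/-- U_5: obtained from T_5 by reversing the edge between v_1 and v_2
(indices 0 and 1), so that v_2 → v_1. -/
def U5 (i j : Fin 5) : Prop :=
  if i = 0 ∧ j = 1 then False else if i = 1 ∧ j = 0 then True else T5 i j

/-- G (given by relation r) contains a copy of the tournament given by s. -/
def Copy {V W : Type*} (r : V → V → Prop) (s : W → W → Prop) : Prop :=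
  ∃ f : W → V, Function.Injective f ∧ ∀ a b, s a b → r (f a) (f b)


lemma mkU5 {V : Type*} (r : V → V → Prop) (a0 a1 a2 a3 a4 : V)
    (d01 : a0 ≠ a1) (d02 : a0 ≠ a2) (d03 : a0 ≠ a3) (d04 : a0 ≠ a4)
    (d12 : a1 ≠ a2) (d13 : a1 ≠ a3) (d14 : a1 ≠ a4)
    (d23 : a2 ≠ a3) (d24 : a2 ≠ a4) (d34 : a3 ≠ a4)
    (e10 : r a1 a0) (e02 : r a0 a2) (e12 : r a1 a2) (e13 : r a1 a3)
    (e23 : r a2 a3) (e24 : r a2 a4) (e34 : r a3 a4) (e30 : r a3 a0)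
    (e40 : r a4 a0) (e41 : r a4 a1) : Copy r U5 := by
  refine ⟨![a0, a1, a2, a3, a4], ?_, ?_⟩
  · intro a b h
    fin_cases a <;> fin_cases b <;> simp_all <;>
      first
        | rfl
        | exact absurd h (by assumption)
        | exact absurd h.symm (by assumption)
  · intro a b hab
    fin_cases a <;> fin_cases b <;> simp [U5, T5] at hab ⊢ <;> assumption

/-- Proposition (a): if exactly one vertex of a cyclic triangle C ⊆ V∖{v} is a
successor of v and u beats all of C, then u is a predecessor of v. -/
theorem pred_of_beats_triangle {V : Type*} (r : V → V → Prop)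
    (hT : IsTournament r) (hT5 : ¬ Copy r T5) (hU5 : ¬ Copy r U5)
    (v x y z u : V) (hxv : x ≠ v) (hyv : y ≠ v) (hzv : z ≠ v)
    (hcyc : r x y ∧ r y z ∧ r z x)
    (hone : (r v x ∧ r y v ∧ r z v) ∨ (r v y ∧ r x v ∧ r z v) ∨
      (r v z ∧ r x v ∧ r y v))
    (huv : u ≠ v) (hux : r u x) (huy : r u y) (huz : r u z) :
    r u v := by
  by_contra h
  have hvu : r v u := (hT.2 v u huv.symm).mpr h
  have irr := hT.1
  have hux' : u ≠ x := fun e => irr x (e ▸ hux)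
  have huy' : u ≠ y := fun e => irr y (e ▸ huy)
  have huz' : u ≠ z := fun e => irr z (e ▸ huz)
  obtain ⟨hxy, hyz, hzx⟩ := hcyc
  have hxy' : x ≠ y := fun e => irr y (e ▸ hxy)
  have hyz' : y ≠ z := fun e => irr z (e ▸ hyz)
  have hzx' : z ≠ x := fun e => irr x (e ▸ hzx)
  rcases hone with ⟨h1, h2, h3⟩ | ⟨h1, h2, h3⟩ | ⟨h1, h2, h3⟩
  · exact hU5 (mkU5 r x u y z v hux'.symm hxy' hzx'.symm hxv huy' huz' huv
      hyz' hyv hzv hux hxy huy huz hyz h2 h3 hzx h1 hvu)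
  · exact hU5 (mkU5 r y u z x v huy'.symm hyz' hxy'.symm hyv huz' hux' huv
      hzx' hzv hxv huy hyz huz hux hzx h3 h2 hxy h1 hvu)
  · exact hU5 (mkU5 r z u x y v huz'.symm hzx' hyz'.symm hzv hux' huy' huv
      hxy' hxv hyv huz hzx hux huy hxy h2 h3 hyz h1 hvu)
end

section
/- Let G be a tournament that is both T_5-free and U_5-free, let v ∈ V(G), and suppose {x, y, z} and {x′, y, z} are cyclic triangles in V(G)\{v} with x ≠ x′ and x → x′. If y → z, y is a predecessor of v, and z is a successor of v, then x and x′ are either both predecessors of v or both successors of v. -/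
set_option maxRecDepth 8000


instance (i j : Fin 5) : Decidable (T5 i j) := by unfold T5; infer_instance
instance (i j : Fin 5) : Decidable (U5 i j) := by unfold U5; infer_instance

/-- Proposition (e): with cyclic triangles {x,y,z} and {x',y,z}, x → x',
y → z, y a predecessor of v and z a successor of v, the vertices x and x'
are both predecessors or both successors of v. -/
theorem both_sides {V : Type*} (r : V → V → Prop)
    (hT : IsTournament r) (hT5 : ¬ Copy r T5) (hU5 : ¬ Copy r U5)
    (v x x' y z : V)
    (hxv : x ≠ v) (hx'v : x' ≠ v) (hyv : y ≠ v) (hzv : z ≠ v) (hxx' : x ≠ x')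
    (hc1 : Cyc3 r x y z) (hc2 : Cyc3 r x' y z)
    (hxe : r x x') (hyz : r y z) (hypred : r y v) (hzsucc : r v z) :
    (r x v ∧ r x' v) ∨ (r v x ∧ r v x') := by
  obtain ⟨hirr, htot⟩ := hT
  have hyz' : y ≠ z := by rintro rfl; exact hirr y hyz
  have hzy : ¬ r z y := (htot y z hyz').mp hyz
  obtain ⟨rxy, -, rzx⟩ : r x y ∧ r y z ∧ r z x := by
    rcases hc1 with h | h
    · exact h
    · exact absurd h.2.1 hzy
  obtain ⟨rx'y, -, rzx'⟩ : r x' y ∧ r y z ∧ r z x' := by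
    rcases hc2 with h | h
    · exact h
    · exact absurd h.2.1 hzy
  have hxy : x ≠ y := by rintro rfl; exact hirr x rxy
  have hxz : x ≠ z := by rintro rfl; exact hirr x rzx
  have hx'y : x' ≠ y := by rintro rfl; exact hirr x' rx'y
  have hx'z : x' ≠ z := by rintro rfl; exact hirr x' rzx'
  by_cases hA : r x v
  · by_cases hB : r x' v
    · exact Or.inl ⟨hA, hB⟩
    · exfalso
      have rvx' : r v x' := (htot v x' hx'v.symm).mpr hB
      apply hU5
      refine ⟨![x', x, y, v, z], ?_, ?_⟩
      · intro a b hab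
        fin_cases a <;> fin_cases b <;>
          first
          | rfl
          | exact absurd hab hxx' | exact absurd hab hxx'.symm
          | exact absurd hab hxv | exact absurd hab hxv.symm
          | exact absurd hab hx'v | exact absurd hab hx'v.symm
          | exact absurd hab hyv | exact absurd hab hyv.symm
          | exact absurd hab hzv | exact absurd hab hzv.symm
          | exact absurd hab hxy | exact absurd hab hxy.symm
          | exact absurd hab hxz | exact absurd hab hxz.symm
          | exact absurd hab hx'y | exact absurd hab hx'y.symm
          | exact absurd hab hx'z | exact absurd hab hx'z.symm
          | exact absurd hab hyz' | exact absurd hab hyz'.symm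
      · intro a b hab
        fin_cases a <;> fin_cases b <;>
          first
          | exact hxe | exact rxy | exact rzx | exact rx'y | exact rzx'
          | exact hyz | exact hypred | exact hzsucc | exact hA | exact rvx'
          | exact absurd hab (by decide)
  · have rvx : r v x := (htot v x hxv.symm).mpr hA
    by_cases hB : r x' v
    · exfalso
      apply hT5
      refine ⟨![x, x', y, v, z], ?_, ?_⟩
      · intro a b hab
        fin_cases a <;> fin_cases b <;>
          first
          | rfl
          | exact absurd hab hxx' | exact absurd hab hxx'.symm
          | exact absurd hab hxv | exact absurd hab hxv.symm
          | exact absurd hab hx'v | exact absurd hab hx'v.symm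
          | exact absurd hab hyv | exact absurd hab hyv.symm
          | exact absurd hab hzv | exact absurd hab hzv.symm
          | exact absurd hab hxy | exact absurd hab hxy.symm
          | exact absurd hab hxz | exact absurd hab hxz.symm
          | exact absurd hab hx'y | exact absurd hab hx'y.symm
          | exact absurd hab hx'z | exact absurd hab hx'z.symm
          | exact absurd hab hyz' | exact absurd hab hyz'.symm
      · intro a b hab
        fin_cases a <;> fin_cases b <;>
          first
          | exact hxe | exact rxy | exact rzx | exact rx'y | exact rzx'
          | exact hyz | exact hypred | exact hzsucc | exact rvx | exact hB
          | exact absurd hab (by decide)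
    · exact Or.inr ⟨rvx, (htot v x' hx'v.symm).mpr hB⟩
end

section
/- Let G be a tournament that is both T_5-free and U_5-free, let v ∈ V(G), and suppose {x, y, z} and {x′, y, z} are cyclic triangles in V(G)\{v} with x ≠ x′ and x → x′. If at least one of x, y, z is a successor of v, then at least one of x′, y, z is a successor of v. -/
lemma inj5 {V : Type*} {a b c d e : V}
    (h1 : a ≠ b) (h2 : a ≠ c) (h3 : a ≠ d) (h4 : a ≠ e)
    (h5 : b ≠ c) (h6 : b ≠ d) (h7 : b ≠ e)
    (h8 : c ≠ d) (h9 : c ≠ e) (h10 : d ≠ e) :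
    Function.Injective ![a, b, c, d, e] := by
  intro i j hij
  fin_cases i <;> fin_cases j <;> simp_all

lemma u5copy {V : Type*} {r : V → V → Prop} {a b c d e : V}
    (e02 : r a c) (e10 : r b a) (e12 : r b c) (e13 : r b d)
    (e23 : r c d) (e24 : r c e) (e34 : r d e) (e30 : r d a)
    (e40 : r e a) (e41 : r e b) :
    ∀ i j, U5 i j → r (![a,b,c,d,e] i) (![a,b,c,d,e] j) := by
  intro i j hij
  fin_cases i <;> fin_cases j <;> simp [U5, T5] at hij ⊢ <;> assumption

/-- Proposition (c): with cyclic triangles {x,y,z} and {x',y,z} and x → x',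
if some vertex of {x,y,z} is a successor of v then so is some vertex of
{x',y,z}. -/
theorem successor_propagates {V : Type*} (r : V → V → Prop)
    (hT : IsTournament r) (hT5 : ¬ Copy r T5) (hU5 : ¬ Copy r U5)
    (v x x' y z : V)
    (hxv : x ≠ v) (hx'v : x' ≠ v) (hyv : y ≠ v) (hzv : z ≠ v) (hxx' : x ≠ x')
    (hc1 : Cyc3 r x y z) (hc2 : Cyc3 r x' y z)
    (hxe : r x x')
    (hsucc : r v x ∨ r v y ∨ r v z) :
    r v x' ∨ r v y ∨ r v z := by
  obtain ⟨hirr, hcmp⟩ := hT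
  rcases hsucc with hvx | h | h
  · by_contra hcon
    push_neg at hcon
    obtain ⟨h1, h2, h3⟩ := hcon
    have hx'v2 : r x' v := (hcmp x' v hx'v).mpr h1
    have hyv2 : r y v := (hcmp y v hyv).mpr h2
    have hzv2 : r z v := (hcmp z v hzv).mpr h3
    have hxy : x ≠ y := by rintro rfl; rcases hc1 with ⟨a,_,_⟩|⟨_,_,a⟩ <;> exact hirr _ a
    have hyz : y ≠ z := by rintro rfl; rcases hc1 with ⟨_,a,_⟩|⟨_,a,_⟩ <;> exact hirr _ a
    have hxz : x ≠ z := by rintro rfl; rcases hc1 with ⟨_,_,a⟩|⟨a,_,_⟩ <;> exact hirr _ a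
    have hx'y : x' ≠ y := by rintro rfl; rcases hc2 with ⟨a,_,_⟩|⟨_,_,a⟩ <;> exact hirr _ a
    have hx'z : x' ≠ z := by rintro rfl; rcases hc2 with ⟨_,_,a⟩|⟨a,_,_⟩ <;> exact hirr _ a
    have hvx' : v ≠ x' := fun e => hx'v e.symm
    have hvxn : v ≠ x := fun e => hxv e.symm
    have hvy : v ≠ y := fun e => hyv e.symm
    have hvz : v ≠ z := fun e => hzv e.symm
    rcases hc1 with ⟨e1, e2, e3⟩ | ⟨e1, e2, e3⟩ <;>
      rcases hc2 with ⟨f1, f2, f3⟩ | ⟨f1, f2, f3⟩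
    · -- x→y→z→x, x'→y→z→x' : U5 via [v,z,x,x',y]
      exact hU5 ⟨![v, z, x, x', y],
        inj5 hvz hvxn hvx' hvy hxz.symm hx'z.symm hyz.symm hxx' hxy hx'y,
        u5copy hvx hzv2 e3 f3 hxe e1 f1 hx'v2 hyv2 e2⟩
    · exact absurd ((hcmp y z hyz).mp e2) (by
        have := (hcmp z y (fun e => hyz e.symm)).mp f2; tauto)
    · exact absurd ((hcmp z y (fun e => hyz e.symm)).mp e2) (by
        have := (hcmp y z hyz).mp f2; tauto)
    · -- reversed triangles : U5 via [v,y,x,x',z]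
      exact hU5 ⟨![v, y, x, x', z],
        inj5 hvy hvxn hvx' hvz hxy.symm hx'y.symm hyz hxx' hxz hx'z,
        u5copy hvx hyv2 e3 f3 hxe e1 f1 hx'v2 hzv2 e2⟩
  · exact Or.inr (Or.inl h)
  · exact Or.inr (Or.inr h)
end

section
/- If the vertex set of a tournament G can be partitioned into sets X, Y, Z such that X ∪ Y, Y ∪ Z, and Z ∪ X are all transitive, then G is T_5-free and U_5-free. -/
/-- Key lemma: if every 4-subset of a 5-vertex tournament `s` contains a cyclic
triangle, and `V` is covered by `X, Y, Z` with all pairwise unions transitive,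
then `r` contains no copy of `s`. -/
lemma no_copy_aux {V : Type*} (r : V → V → Prop)
    (X Y Z : Set V) (hcover : X ∪ Y ∪ Z = Set.univ)
    (tXY : IsTransOn r (X ∪ Y)) (tYZ : IsTransOn r (Y ∪ Z)) (tZX : IsTransOn r (Z ∪ X))
    (s : Fin 5 → Fin 5 → Prop)
    (hs : ∀ i : Fin 5, ∃ a b c : Fin 5,
      a ≠ i ∧ b ≠ i ∧ c ≠ i ∧ s a b ∧ s b c ∧ s c a) :
    ¬ Copy r s := by
  classical
  rintro ⟨f, -, hf⟩
  set g : Fin 5 → Fin 3 := fun j => if f j ∈ X then 0 else if f j ∈ Y then 1 else 2 with hg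
  have hmem : ∀ v : V, v ∈ X ∨ v ∈ Y ∨ v ∈ Z := by
    intro v
    have : v ∈ X ∪ Y ∪ Z := hcover.symm ▸ Set.mem_univ v
    simpa [Set.mem_union, or_assoc] using this
  -- pigeonhole: some class is hit at most once
  have hcard : ∑ c : Fin 3, (Finset.univ.filter (fun j => g j = c)).card = 5 := by
    have := Finset.card_eq_sum_card_fiberwise
      (f := g) (s := Finset.univ) (t := Finset.univ) (fun x _ => Finset.mem_univ _)
    simpa using this.symm
  have hsmall : ∃ c : Fin 3, (Finset.univ.filter (fun j => g j = c)).card ≤ 1 := by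
    by_contra h
    push_neg at h
    have h6 : 6 ≤ ∑ c : Fin 3, (Finset.univ.filter (fun j => g j = c)).card := by
      calc (6 : ℕ) = ∑ _c : Fin 3, 2 := by simp
        _ ≤ _ := Finset.sum_le_sum (fun c _ => h c)
    omega
  obtain ⟨cv, hcv⟩ := hsmall
  have hexc : ∃ i : Fin 5, ∀ j, j ≠ i → g j ≠ cv := by
    by_cases h : ∃ j, g j = cv
    · obtain ⟨j0, hj0⟩ := h
      refine ⟨j0, fun j hne hj => hne ?_⟩
      exact Finset.card_le_one.mp hcv j (by simp [hj]) j0 (by simp [hj0])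
    · push_neg at h
      exact ⟨0, fun j _ => h j⟩
  obtain ⟨i, hi⟩ := hexc
  obtain ⟨a, b, c, ha, hb, hc, s1, s2, s3⟩ := hs i
  fin_cases cv
  · have key : ∀ j, j ≠ i → f j ∈ Y ∪ Z := by
      intro j hj
      have hne := hi j hj
      have hx : f j ∉ X := fun h => hne (by simp [hg, h])
      rcases hmem (f j) with h | h | h
      · exact absurd h hx
      · exact Or.inl h
      · exact Or.inr h
    exact tYZ _ (key a ha) _ (key b hb) _ (key c hc) ⟨hf _ _ s1, hf _ _ s2, hf _ _ s3⟩
  · have key : ∀ j, j ≠ i → f j ∈ Z ∪ X := by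
      intro j hj
      have hne := hi j hj
      by_cases hx : f j ∈ X
      · exact Or.inr hx
      · have hy : f j ∉ Y := fun h => hne (by simp [hg, hx, h])
        rcases hmem (f j) with h | h | h
        · exact absurd h hx
        · exact absurd h hy
        · exact Or.inl h
    exact tZX _ (key a ha) _ (key b hb) _ (key c hc) ⟨hf _ _ s1, hf _ _ s2, hf _ _ s3⟩
  · have key : ∀ j, j ≠ i → f j ∈ X ∪ Y := by
      intro j hj
      have hne := hi j hj
      by_cases hx : f j ∈ X
      · exact Or.inl hx
      · by_cases hy : f j ∈ Y
        · exact Or.inr hy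
        · exact absurd (by simp [hg, hx, hy]) hne
    exact tXY _ (key a ha) _ (key b hb) _ (key c hc) ⟨hf _ _ s1, hf _ _ s2, hf _ _ s3⟩

/-- If V(G) is partitioned into X, Y, Z with X ∪ Y, Y ∪ Z, Z ∪ X transitive,
then G is T_5-free and U_5-free. -/
theorem partition_implies_free {V : Type*} (r : V → V → Prop)
    (hT : IsTournament r)
    (X Y Z : Set V) (hcover : X ∪ Y ∪ Z = Set.univ)
    (hXY : Disjoint X Y) (hYZ : Disjoint Y Z) (hZX : Disjoint Z X)
    (tXY : IsTransOn r (X ∪ Y)) (tYZ : IsTransOn r (Y ∪ Z)) (tZX : IsTransOn r (Z ∪ X)) :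
    ¬ Copy r T5 ∧ ¬ Copy r U5 := by
  constructor
  · exact no_copy_aux r X Y Z hcover tXY tYZ tZX T5 (by decide)
  · exact no_copy_aux r X Y Z hcover tXY tYZ tZX U5 (by decide)
end

section
/- Let γ = log_3 2. If a, b, c are nonnegative real numbers with c = min(a, b, c) and a + b + c = n, then a^γ + b^γ ≥ n^γ. -/
open Real

lemma gamma_pos : 0 < Real.logb 3 2 := Real.logb_pos (by norm_num) (by norm_num)

lemma gamma_lt_one : Real.logb 3 2 < 1 := by
  have : Real.logb 3 2 < Real.logb 3 3 :=
    (Real.logb_lt_logb_iff (by norm_num) (by norm_num) (by norm_num)).2 (by norm_num)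
  simpa [Real.logb_self_eq_one] using this

lemma three_rpow : (3 : ℝ) ^ Real.logb 3 2 = 2 :=
  Real.rpow_logb (by norm_num) (by norm_num) (by norm_num)

/-- Key lemma: for 0 < b ≤ a, (a+2b)^γ ≤ a^γ + b^γ. -/
lemma key_lemma {a b : ℝ} (hb : 0 < b) (hba : b ≤ a) :
    (a + 2 * b) ^ Real.logb 3 2 ≤ a ^ Real.logb 3 2 + b ^ Real.logb 3 2 := by
  set γ := Real.logb 3 2 with hγ
  have hγ0 : 0 < γ := gamma_pos
  have hγ1 : γ < 1 := gamma_lt_one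
  -- f x = x^γ + b^γ - (x+2b)^γ is monotone on [b, ∞)
  set f : ℝ → ℝ := fun x => x ^ γ + b ^ γ - (x + 2 * b) ^ γ with hf
  have hmono : MonotoneOn f (Set.Ici b) := by
    have hderiv : ∀ x ∈ interior (Set.Ici b), HasDerivAt f
        (γ * x ^ (γ - 1) - γ * (x + 2 * b) ^ (γ - 1)) x := by
      intro x hx
      rw [interior_Ici] at hx
      have hx0 : 0 < x := hb.trans hx
      have h1 : HasDerivAt (fun x : ℝ => x ^ γ) (γ * x ^ (γ - 1)) x :=
        Real.hasDerivAt_rpow_const (Or.inl hx0.ne')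
      have h2 : HasDerivAt (fun x : ℝ => (x + 2 * b) ^ γ)
          (γ * (x + 2 * b) ^ (γ - 1)) x := by
        have hy : HasDerivAt (fun x : ℝ => x + 2 * b) 1 x :=
          (hasDerivAt_id x).add_const _
        have := (Real.hasDerivAt_rpow_const
          (p := γ) (x := x + 2 * b) (Or.inl (by positivity))).comp x hy
        rw [mul_one] at this
        exact this
      exact (h1.add_const (b ^ γ)).sub h2
    apply monotoneOn_of_deriv_nonneg (convex_Ici b)
    · apply Continuous.continuousOn
      exact ((Real.continuous_rpow_const hγ0.le).add continuous_const).sub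
        ((Real.continuous_rpow_const hγ0.le).comp (continuous_id.add continuous_const))
    · intro x hx
      exact (hderiv x hx).differentiableAt.differentiableWithinAt
    · intro x hx
      rw [(hderiv x hx).deriv]
      rw [interior_Ici] at hx
      have hx0 : 0 < x := hb.trans hx
      have : (x + 2 * b) ^ (γ - 1) ≤ x ^ (γ - 1) :=
        Real.rpow_le_rpow_of_nonpos hx0 (by linarith) (by linarith)
      nlinarith
  have hfb : f b = 0 := by
    have h3b : (b + 2 * b) ^ γ = 3 ^ γ * b ^ γ := by
      rw [show b + 2 * b = 3 * b by ring, Real.mul_rpow (by norm_num) hb.le]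
    show b ^ γ + b ^ γ - (b + 2 * b) ^ γ = 0
    rw [h3b, hγ, three_rpow]
    ring
  have := hmono (Set.self_mem_Ici) (Set.mem_Ici.2 hba) hba
  rw [hfb] at this
  simp only [hf] at this
  linarith

/-- If a, b, c ≥ 0 with c = min(a,b,c) and a + b + c = n, then
a^γ + b^γ ≥ n^γ where γ = log_3 2. -/
theorem rpow_two_of_three (a b c n : ℝ) (ha : 0 ≤ a) (hb : 0 ≤ b) (hc : 0 ≤ c)
    (hmin : c = min a (min b c)) (hsum : a + b + c = n) :
    a ^ (Real.logb 3 2) + b ^ (Real.logb 3 2) ≥ n ^ (Real.logb 3 2) := by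
  set γ := Real.logb 3 2 with hγ
  have hγ0 : 0 < γ := gamma_pos
  have hca : c ≤ a := hmin ▸ min_le_left _ _
  have hcb : c ≤ b := le_trans (hmin ▸ min_le_right _ _) (min_le_left _ _)
  subst hsum
  rcases le_total b a with hba | hab
  · -- c ≤ b ≤ a
    rcases eq_or_lt_of_le hb with hb0 | hb0
    · have hc0 : c = 0 := le_antisymm (hb0 ▸ hcb) hc
      rw [← hb0, hc0, Real.zero_rpow hγ0.ne']
      simp
    · have h1 : (a + b + c) ^ γ ≤ (a + 2 * b) ^ γ :=
        Real.rpow_le_rpow (by linarith) (by linarith) hγ0.le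
      have h2 := key_lemma hb0 hba
      linarith
  · -- c ≤ a ≤ b
    rcases eq_or_lt_of_le ha with ha0 | ha0
    · have hc0 : c = 0 := le_antisymm (ha0 ▸ hca) hc
      rw [← ha0, hc0, Real.zero_rpow hγ0.ne']
      simp
    · have h1 : (a + b + c) ^ γ ≤ (b + 2 * a) ^ γ :=
        Real.rpow_le_rpow (by linarith) (by linarith) hγ0.le
      have h2 := key_lemma ha0 hab
      linarith
end
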